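/- Minimal-word invariance under the cluster map: for a word A ∈ {0,1}^{2n} with A_{2n} = 1 whose only balance point is at the start (every proper suffix having strictly more ones than zeros, and the full word exactly balanced), the word Γ A of length 2n−2 defined by (Γ A)_{i+1} = A_i + min{A_{i-1}, 1−A_i} − min{A_i, 1−A_{i+1}} for 1 ≤ i ≤ 2n−2 is again such a minimal word of length 2n−2. -/

import Mathlib

/-- The traffic rule (simultaneous 10 → 01) applied to a configuration on ℤ;
words of length 2n are embedded on positions 1,…,2n with zeros outside
(boundary convention A₀ = 0, A_{2n+1} = 0). -/
def T (A : ℤ → ℕ) : ℤ → ℕ :=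
  fun i => A i + min (A (i - 1)) (1 - A i) - min (A i) (1 - A (i + 1))

/-- Ω^{2n}: binary words of length 2n (supported on [1,2n]), ending with a one,
exactly balanced (n ones), and such that every proper suffix segment has
strictly more ones than zeros (the only balance point is at the start). -/
def OmegaW (n : ℕ) (A : ℤ → ℕ) : Prop :=
  (∀ i : ℤ, (i < 1 ∨ (2 * n : ℤ) < i) → A i = 0) ∧
  A (2 * n) = 1 ∧
  (∑ i ∈ Finset.Icc (1 : ℤ) (2 * n), (A i : ℤ)) = n ∧
  ∀ k : ℤ, 1 < k → k ≤ 2 * n →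
    2 * (∑ i ∈ Finset.Icc k (2 * n), (A i : ℤ)) > 2 * n - k + 1

/-- The map Γ: apply the traffic rule and drop the first and last symbols,
producing a word of length 2n - 2 (supported on [1, 2n-2]). -/
def Gamma (n : ℕ) (A : ℤ → ℕ) : ℤ → ℕ :=
  fun i => if 1 ≤ i ∧ i ≤ 2 * (n : ℤ) - 2 then T A (i + 1) else 0


lemma sum_Icc_bot (f : ℤ → ℤ) (k M : ℤ) (h : k ≤ M) :
    ∑ i ∈ Finset.Icc k M, f i = f k + ∑ i ∈ Finset.Icc (k+1) M, f i := by
  rw [show Finset.Icc k M = insert k (Finset.Icc (k+1) M) by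
    ext x; simp only [Finset.mem_Icc, Finset.mem_insert]; omega,
    Finset.sum_insert (by simp)]

lemma telescope (f : ℤ → ℤ) (k M : ℤ) (h : k - 1 ≤ M) :
    ∑ i ∈ Finset.Icc k M, (f i - f (i+1)) = f k - f (M+1) := by
  obtain ⟨N, rfl⟩ : ∃ N : ℕ, M = k - 1 + N := ⟨(M - (k-1)).toNat, by omega⟩
  clear h
  induction N with
  | zero =>
      rw [show Finset.Icc k (k-1+((0:ℕ):ℤ)) = ∅ by simp, Finset.sum_empty,
        show k-1+((0:ℕ):ℤ)+1 = k by push_cast; ring, sub_self]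
  | succ N ih =>
      have h1 : Finset.Icc k (k-1+((N+1:ℕ):ℤ)) =
          insert (k-1+(N:ℕ)+1) (Finset.Icc k (k-1+(N:ℕ))) := by
        ext x; simp only [Finset.mem_Icc, Finset.mem_insert]; push_cast; omega
      rw [h1, Finset.sum_insert (by simp), ih]
      have : k-1+((N+1:ℕ):ℤ)+1 = k-1+(N:ℕ)+1+1 := by push_cast; ring
      rw [this]
      ring

lemma T_cast (A : ℤ → ℕ) (hA : ∀ i, A i ≤ 1) (i : ℤ) :
    (T A i : ℤ) = (A i : ℤ) + (min ((A (i-1) : ℤ)) (1 - A i) - min ((A i : ℤ)) (1 - A (i+1))) := by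
  unfold T
  have h1 : min (A i) (1 - A (i+1)) ≤ A i + min (A (i - 1)) (1 - A i) :=
    le_trans (min_le_left _ _) (Nat.le_add_right _ _)
  rw [Nat.cast_sub h1, Nat.cast_add, Nat.cast_min, Nat.cast_min,
    Nat.cast_sub (hA (i+1)), Nat.cast_sub (hA i)]
  push_cast
  ring

lemma sum_T (A : ℤ → ℕ) (hA : ∀ i, A i ≤ 1) (k M : ℤ) (h : k - 1 ≤ M) :
    ∑ i ∈ Finset.Icc k M, (T A i : ℤ) =
      (∑ i ∈ Finset.Icc k M, (A i : ℤ))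
        + min ((A (k-1) : ℤ)) (1 - A k) - min ((A M : ℤ)) (1 - A (M+1)) := by
  have hc : ∀ i ∈ Finset.Icc k M, (T A i : ℤ) =
      (A i : ℤ) + ((fun j => min ((A (j-1) : ℤ)) (1 - A j)) i
        - (fun j => min ((A (j-1) : ℤ)) (1 - A j)) (i+1)) := by
    intro i _
    simpa using T_cast A hA i
  rw [Finset.sum_congr rfl hc, Finset.sum_add_distrib,
    telescope (fun j => min ((A (j-1) : ℤ)) (1 - A j)) k M h]
  rw [show M+1-1 = M by ring]
  ring

/-- Γ maps minimal words to minimal words: Γ : Ω^{2n} → Ω^{2n-2}. -/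
theorem Gamma_maps_Omega (n : ℕ) (hn : 2 ≤ n) (A : ℤ → ℕ)
    (hA : ∀ i, A i ≤ 1) (h : OmegaW n A) :
    OmegaW (n - 1) (Gamma n A) := by
  obtain ⟨hsupp, hlast, hsum, hsuf⟩ := h
  have hn' : (2 : ℤ) ≤ (n : ℤ) := by exact_mod_cast hn
  set S : ℤ → ℤ := fun k => ∑ i ∈ Finset.Icc k (2 * (n:ℤ)), (A i : ℤ) with hS
  have hsuf' : ∀ k : ℤ, 1 < k → k ≤ 2 * (n:ℤ) → 2 * S k > 2 * (n:ℤ) - k + 1 := hsuf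
  have hS1 : S 1 = (n:ℤ) := hsum
  have hstep : ∀ k : ℤ, k ≤ 2 * (n:ℤ) → S k = (A k : ℤ) + S (k + 1) := by
    intro k hk
    exact sum_Icc_bot (fun i => (A i : ℤ)) k (2*(n:ℤ)) hk
  have hA1 : A 1 = 0 := by
    have h2 := hsuf' 2 (by omega) (by omega)
    have h3 := hstep 1 (by omega)
    rw [show (1:ℤ)+1 = 2 by ring] at h3
    have hb := hA 1
    omega
  have hGsum : ∀ k : ℤ, 1 ≤ k →
      ∑ i ∈ Finset.Icc k (2 * (n:ℤ) - 2), ((Gamma n A i : ℤ)) =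
      ∑ j ∈ Finset.Icc (k+1) (2 * (n:ℤ) - 1), (T A j : ℤ) := by
    intro k hk
    have h1 : ∀ i ∈ Finset.Icc k (2 * (n:ℤ) - 2), ((Gamma n A i : ℤ)) = (T A (i+1) : ℤ) := by
      intro i hi
      simp only [Finset.mem_Icc] at hi
      simp only [Gamma]
      rw [if_pos ⟨by omega, by omega⟩]
    rw [Finset.sum_congr rfl h1]
    rw [show Finset.Icc (k+1) (2 * (n:ℤ) - 1)
        = (Finset.Icc k (2 * (n:ℤ) - 2)).map (addRightEmbedding 1) by
      rw [Finset.map_add_right_Icc]; ring_nf, Finset.sum_map]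
    simp
  have hTsum : ∀ k : ℤ, 2 ≤ k → k ≤ 2 * (n:ℤ) - 1 →
      ∑ j ∈ Finset.Icc k (2 * (n:ℤ) - 1), (T A j : ℤ) =
        S k - 1 + min ((A (k-1) : ℤ)) (1 - A k) := by
    intro k hk2 hk3
    rw [sum_T A hA k (2*(n:ℤ)-1) (by omega)]
    have e1 : S k = (∑ i ∈ Finset.Icc k (2 * (n:ℤ) - 1), (A i : ℤ)) + (A (2*(n:ℤ)) : ℤ) := by
      rw [hS]
      simp only []
      rw [show Finset.Icc k (2*(n:ℤ)) = insert (2*(n:ℤ)) (Finset.Icc k (2*(n:ℤ)-1)) by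
        ext x; simp only [Finset.mem_Icc, Finset.mem_insert]; omega,
        Finset.sum_insert (by simp)]
      ring
    rw [show (2*(n:ℤ)-1)+1 = 2*(n:ℤ) by ring, hlast]
    have hm : min ((A (2*(n:ℤ)-1) : ℤ)) (1 - ((1:ℕ):ℤ)) = 0 := by
      simp
    rw [hm]
    rw [hlast] at e1
    push_cast at e1
    omega
  constructor
  · intro i hi
    simp only [Gamma]
    rw [if_neg]
    push_neg
    intro h1
    omega
  refine ⟨?_, ?_, ?_⟩
  · -- last symbol
    have hA2 : A (2*(n:ℤ)-2) = 1 ∨ A (2*(n:ℤ)-1) = 1 := by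
      by_contra hc
      push_neg at hc
      have b1 : A (2*(n:ℤ)-2) = 0 := by have := hA (2*(n:ℤ)-2); omega
      have b2 : A (2*(n:ℤ)-1) = 0 := by have := hA (2*(n:ℤ)-1); omega
      have h1 := hsuf' (2*(n:ℤ)-2) (by omega) (by omega)
      have s1 := hstep (2*(n:ℤ)-2) (by omega)
      have s2 := hstep (2*(n:ℤ)-1) (by omega)
      rw [show 2*(n:ℤ)-2+1 = 2*(n:ℤ)-1 by ring] at s1
      rw [show 2*(n:ℤ)-1+1 = 2*(n:ℤ) by ring] at s2
      have s3 : S (2*(n:ℤ)) = 1 := by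
        rw [hS]
        simp only []
        rw [show Finset.Icc (2*(n:ℤ)) (2*(n:ℤ)) = {2*(n:ℤ)} by simp]
        simp [hlast]
      omega
    show Gamma n A (2 * ((n:ℕ) - 1 : ℕ) : ℤ) = 1
    rw [show (((n:ℕ) - 1 : ℕ) : ℤ) = ((n:ℤ) - 1 : ℤ) by omega,
      show 2*((n:ℤ)-1) = 2*(n:ℤ)-2 by ring]
    simp only [Gamma]
    rw [if_pos ⟨by omega, by omega⟩]
    unfold T
    rw [show (2*(n:ℤ)-2+1) = 2*(n:ℤ)-1 by ring, show (2*(n:ℤ)-1-1) = 2*(n:ℤ)-2 by ring,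
      show (2*(n:ℤ)-1+1) = 2*(n:ℤ) by ring, hlast]
    have b1 := hA (2*(n:ℤ)-1)
    have b2 := hA (2*(n:ℤ)-2)
    rcases hA2 with h1 | h1
    · rw [h1]
      interval_cases (A (2*(n:ℤ)-1)) <;> simp
    · rw [h1]
      simp
  · -- total sum
    rw [show (((n:ℕ) - 1 : ℕ) : ℤ) = ((n:ℤ) - 1 : ℤ) by omega,
      show 2*((n:ℤ)-1) = 2*(n:ℤ)-2 by ring]
    rw [hGsum 1 (by omega), show (1:ℤ)+1 = 2 by ring, hTsum 2 (by omega) (by omega)]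
    have s1 := hstep 1 (by omega)
    rw [show (1:ℤ)+1 = 2 by ring] at s1
    have hm : min ((A (2-1:ℤ) : ℤ)) (1 - (A 2 : ℤ)) = 0 := by
      rw [show (2:ℤ)-1 = 1 by ring, hA1]
      simp
      exact hA 2
    rw [hm]
    
    rw [hA1] at s1
    push_cast at s1
    omega
  · -- suffix conditions
    intro k hk1 hk2
    rw [show (((n:ℕ) - 1 : ℕ) : ℤ) = ((n:ℤ) - 1 : ℤ) by omega,
      show 2*((n:ℤ)-1) = 2*(n:ℤ)-2 by ring] at hk2 ⊢
    
    rw [hGsum k (by omega), hTsum (k+1) (by omega) (by omega)]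
    rw [show k+1-1 = k by ring]
    have hk' := hsuf' (k+1) (by omega) (by omega)
    have hmin : (0:ℤ) ≤ min ((A k : ℤ)) (1 - (A (k+1) : ℤ)) := by
      have := hA (k+1)
      simp only [le_min_iff]
      constructor
      · positivity
      · omega
    rcases le_or_gt (2*(n:ℤ) - k + 2) (2 * S (k+1)) with hcase | hcase
    · omega
    · have htight : 2 * S (k+1) = 2*(n:ℤ) - k + 1 := by omega
      have hk0 := hsuf' k (by omega) (by omega)
      have s1 := hstep k (by omega)
      have hAk : A k = 1 := by have := hA k; omega
      have hk2' := hsuf' (k+2) (by omega) (by omega)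
      have s2 := hstep (k+1) (by omega)
      rw [show k+1+1 = k+2 by ring] at s2
      have hAk1 : A (k+1) = 0 := by
        have := hA (k+1)
        omega
      rw [hAk, hAk1]
      simp
      omega
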